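/- Let f : F₂ⁿ × F₂ᵗ → F₂^ℓ be a strong k →_ε k' condenser and C ⊆ Σ^{2^t} its induced code, where Σ = F₂^ℓ. Then for any mixture S over Σ^{2^t}, the agreement list satisfies |LIST_C(S, ρ(S)·2^{ℓ−k'} + ε)| < 2^k. -/

import Mathlib

open scoped Classical

/-- `p` is a probability distribution on the finite type `α`. -/
def IsDist {α : Type*} [Fintype α] (p : α → ℝ) : Prop :=
  (∀ a, 0 ≤ p a) ∧ ∑ a, p a = 1

/-- The distribution `p` has min-entropy at least `k`, i.e. `p a ≤ 2^{-k}` for all `a`. -/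
def MinEntGe {α : Type*} [Fintype α] (p : α → ℝ) (k : ℝ) : Prop :=
  ∀ a, p a ≤ (2 : ℝ) ^ (-k)

/-- Statistical distance between two distributions on a finite type. -/
noncomputable def sdist {α : Type*} [Fintype α] (p q : α → ℝ) : ℝ :=
  (∑ a, |p a - q a|) / 2

/-- The distribution of `(Y, f(X, Y))` where `X ∼ p` and `Y` is a uniform seed. -/
noncomputable def jointDist (n t l : ℕ) (f : (Fin n → Bool) → (Fin t → Bool) → (Fin l → Bool))
    (p : (Fin n → Bool) → ℝ) : (Fin t → Bool) × (Fin l → Bool) → ℝ :=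
  fun yz => (∑ x : Fin n → Bool, if f x yz.1 = yz.2 then p x else 0) / 2 ^ t

/-- `f : F₂ⁿ × F₂ᵗ → F₂ˡ` is a strong `k →_ε k'` condenser: for every distribution of
min-entropy at least `k`, the distribution of `(Y, f(X,Y))` (with uniform seed `Y`) is
`ε`-close to some distribution of min-entropy at least `t + k'`. -/
def IsCondenser (n t l : ℕ) (f : (Fin n → Bool) → (Fin t → Bool) → (Fin l → Bool))
    (k ε k' : ℝ) : Prop :=
  ∀ p : (Fin n → Bool) → ℝ, IsDist p → MinEntGe p k →
    ∃ q : (Fin t → Bool) × (Fin l → Bool) → ℝ, IsDist q ∧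
      MinEntGe q ((t : ℝ) + k') ∧ sdist (jointDist n t l f p) q ≤ ε

/-- The agreement `Agr(w, S)` of a word with a mixture `S`. -/
noncomputable def agr (t l : ℕ) (w : (Fin t → Bool) → (Fin l → Bool))
    (S : (Fin t → Bool) → Finset (Fin l → Bool)) : ℝ :=
  ((Finset.univ.filter fun i => w i ∈ S i).card : ℝ) / 2 ^ t

/-- `ρ(S) = wgt(S)/(n|Σ|)`, the expected agreement of a random word with `S`. -/
noncomputable def mixRho (t l : ℕ) (S : (Fin t → Bool) → Finset (Fin l → Bool)) : ℝ :=
  (∑ i, ((S i).card : ℝ)) / (2 ^ t * 2 ^ l)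

set_option maxHeartbeats 1000000

/-- If `f` is a strong `k →_ε k'` condenser and `C` its induced code, then for any
mixture `S`, `|LIST_C(S, ρ(S)·2^{ℓ−k'} + ε)| < 2^k`. -/
theorem stmt11 (n t l : ℕ) (f : (Fin n → Bool) → (Fin t → Bool) → (Fin l → Bool))
    (k ε k' : ℝ) (hf : IsCondenser n t l f k ε k')
    (S : (Fin t → Bool) → Finset (Fin l → Bool)) (hS : ∀ i, (S i).Nonempty) :
    (((((Finset.univ : Finset (Fin n → Bool)).image fun x => fun i => f x i)).filter
        fun w => mixRho t l S * (2 : ℝ) ^ ((l : ℝ) - k') + ε < agr t l w S).card : ℝ)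
      < (2 : ℝ) ^ k := by
  classical
  set W := ((Finset.univ : Finset (Fin n → Bool)).image fun x => fun i => f x i) with hW
  set α := mixRho t l S * (2 : ℝ) ^ ((l : ℝ) - k') + ε with hα
  set L := W.filter (fun w => α < agr t l w S) with hL
  by_contra hcon
  push_neg at hcon
  have h2k : (0:ℝ) < (2:ℝ) ^ k := Real.rpow_pos_of_pos (by norm_num) k
  have hLcpos : (0:ℝ) < (L.card : ℝ) := lt_of_lt_of_le h2k hcon
  have hLpos : 0 < L.card := by exact_mod_cast hLcpos
  -- choose preimages
  have hg : ∀ w : ((Fin t → Bool) → (Fin l → Bool)),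
      ∃ x : Fin n → Bool, w ∈ L → (fun i => f x i) = w := by
    intro w
    by_cases hw : w ∈ L
    · have hw' : w ∈ W := (Finset.mem_filter.mp hw).1
      rw [hW, Finset.mem_image] at hw'
      obtain ⟨x, -, hx⟩ := hw'
      exact ⟨x, fun _ => hx⟩
    · exact ⟨fun _ => false, fun h => absurd h hw⟩
  choose g hgf using hg
  set T := L.image g with hT
  have hTcard : T.card = L.card := by
    apply Finset.card_image_of_injOn
    intro w hw w' hw' h
    rw [← hgf w hw, ← hgf w' hw', h]
  set p : (Fin n → Bool) → ℝ := fun x => if x ∈ T then ((L.card : ℝ))⁻¹ else 0 with hp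
  have hpsum : ∑ a, p a = 1 := by
    rw [hp]
    rw [Finset.sum_ite_mem, Finset.univ_inter, Finset.sum_const, hTcard, nsmul_eq_mul]
    exact mul_inv_cancel₀ (ne_of_gt hLcpos)
  have hpd : IsDist p := by
    refine ⟨fun a => ?_, hpsum⟩
    rw [hp]
    dsimp only
    split_ifs
    · positivity
    · exact le_refl 0
  have hpme : MinEntGe p k := by
    intro a
    rw [hp]
    dsimp only
    rw [Real.rpow_neg (by norm_num : (0:ℝ) ≤ 2)]
    split_ifs
    · exact inv_anti₀ h2k hcon
    · positivity
  obtain ⟨q, hqd, hqme, hsd⟩ := hf p hpd hpme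
  set D := jointDist n t l f p with hD
  set E := (Finset.univ : Finset ((Fin t → Bool) × (Fin l → Bool))).filter
      (fun yz => yz.2 ∈ S yz.1) with hE
  have hcard2t : ((Fintype.card (Fin t → Bool) : ℕ) : ℝ) = 2 ^ t := by
    simp [Fintype.card_fun]
  have h2tpos : (0:ℝ) < 2 ^ t := by positivity
  -- total mass of D is 1
  have hDsum : ∑ yz, D yz = 1 := by
    rw [hD]
    simp only [jointDist]
    rw [← Finset.sum_div, Fintype.sum_prod_type]
    have hy : ∀ y : Fin t → Bool,
        ∑ z : Fin l → Bool, ∑ x : Fin n → Bool, (if f x y = z then p x else 0) = 1 := by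
      intro y
      rw [Finset.sum_comm]
      have : ∀ x : Fin n → Bool,
          ∑ z : Fin l → Bool, (if f x y = z then p x else 0) = p x := by
        intro x
        rw [Finset.sum_ite_eq]
        simp
      rw [Finset.sum_congr rfl (fun x _ => this x)]
      exact hpsum
    rw [Finset.sum_congr rfl (fun y _ => hy y), Finset.sum_const, Finset.card_univ,
      nsmul_eq_mul, mul_one]
    rw [div_eq_one_iff_eq (ne_of_gt h2tpos)]
    exact hcard2t
  -- row computation
  have hrow : ∀ x : Fin n → Bool, (∑ yz ∈ E, if f x yz.1 = yz.2 then p x else 0)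
      = p x * (((Finset.univ.filter fun i => f x i ∈ S i).card : ℕ) : ℝ) := by
    intro x
    rw [hE, Finset.sum_filter, Fintype.sum_prod_type]
    have hy : ∀ y : Fin t → Bool,
        (∑ z : Fin l → Bool, if z ∈ S y then (if f x y = z then p x else 0) else 0)
        = if f x y ∈ S y then p x else 0 := by
      intro y
      have : ∀ z : Fin l → Bool, (if z ∈ S y then (if f x y = z then p x else 0) else 0)
          = (if f x y = z then (if z ∈ S y then p x else 0) else 0) := by
        intro z
        by_cases h1 : f x y = z <;> by_cases h2 : z ∈ S y <;> simp [h1, h2]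
      rw [Finset.sum_congr rfl (fun z _ => this z), Finset.sum_ite_eq]
      simp
    rw [Finset.sum_congr rfl (fun y _ => hy y), ← Finset.sum_filter, Finset.sum_const,
      nsmul_eq_mul, mul_comm]
  -- agreement sum form
  have hADform : ∑ yz ∈ E, D yz = ∑ x : Fin n → Bool, p x * agr t l (fun i => f x i) S := by
    rw [hD]
    simp only [jointDist]
    rw [← Finset.sum_div, Finset.sum_comm]
    rw [Finset.sum_congr rfl (fun x (_ : x ∈ Finset.univ) => hrow x), Finset.sum_div]
    refine Finset.sum_congr rfl fun x _ => ?_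
    rw [agr]
    ring
  -- lower bound: α < ∑_E D
  have hAD : α < ∑ yz ∈ E, D yz := by
    rw [hADform]
    have hz : ∑ x : Fin n → Bool, p x * agr t l (fun i => f x i) S
        = ∑ x ∈ T, p x * agr t l (fun i => f x i) S := by
      refine (Finset.sum_subset (Finset.subset_univ T) (fun x _ hx => ?_)).symm
      rw [hp]
      simp [hx]
    rw [hz]
    have hTne : T.Nonempty := by
      rw [← Finset.card_pos, hTcard]; exact hLpos
    have hinv : (0:ℝ) < ((L.card : ℝ))⁻¹ := inv_pos.mpr hLcpos
    have hlt : ∀ x ∈ T, ((L.card : ℝ))⁻¹ * α < p x * agr t l (fun i => f x i) S := by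
      intro x hx
      have hpx : p x = ((L.card : ℝ))⁻¹ := by rw [hp]; simp [hx]
      rw [hpx]
      rw [hT, Finset.mem_image] at hx
      obtain ⟨w, hw, rfl⟩ := hx
      have h1 : (fun i => f (g w) i) = w := hgf w hw
      rw [h1]
      exact mul_lt_mul_of_pos_left ((Finset.mem_filter.mp hw).2) hinv
    have := Finset.sum_lt_sum_of_nonempty hTne hlt
    calc α = ∑ _x ∈ T, ((L.card : ℝ))⁻¹ * α := by
            rw [Finset.sum_const, hTcard, nsmul_eq_mul, ← mul_assoc,
              mul_inv_cancel₀ (ne_of_gt hLcpos), one_mul]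
      _ < _ := this
  -- upper bound on ∑_E q
  have hEcard : (E.card : ℝ) = ∑ i, ((S i).card : ℝ) := by
    rw [hE]
    rw [Finset.card_filter]
    push_cast
    rw [Fintype.sum_prod_type]
    refine Finset.sum_congr rfl fun y _ => ?_
    simp [Finset.sum_ite_mem]
  have hAq : ∑ yz ∈ E, q yz ≤ mixRho t l S * (2:ℝ) ^ ((l : ℝ) - k') := by
    have h1 : ∑ yz ∈ E, q yz ≤ ∑ _yz ∈ E, (2:ℝ) ^ (-((t:ℝ) + k')) :=
      Finset.sum_le_sum (fun yz _ => hqme yz)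
    have h2 : ∑ _yz ∈ E, (2:ℝ) ^ (-((t:ℝ) + k')) = (E.card : ℝ) * (2:ℝ) ^ (-((t:ℝ) + k')) := by
      rw [Finset.sum_const, nsmul_eq_mul]
    have h3 : (2:ℝ) ^ (-((t:ℝ) + k')) = ((2:ℝ)^t)⁻¹ * ((2:ℝ) ^ k')⁻¹ := by
      rw [neg_add, Real.rpow_add (by norm_num : (0:ℝ) < 2), Real.rpow_neg (by norm_num : (0:ℝ) ≤ 2),
        Real.rpow_neg (by norm_num : (0:ℝ) ≤ 2), Real.rpow_natCast]
    have h4 : (2:ℝ) ^ ((l:ℝ) - k') = (2:ℝ)^l * ((2:ℝ) ^ k')⁻¹ := by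
      rw [sub_eq_add_neg, Real.rpow_add (by norm_num : (0:ℝ) < 2),
        Real.rpow_neg (by norm_num : (0:ℝ) ≤ 2), Real.rpow_natCast]
    have h2lpos : (0:ℝ) < 2 ^ l := by positivity
    have hkpos : (0:ℝ) < (2:ℝ) ^ k' := Real.rpow_pos_of_pos (by norm_num) k'
    calc ∑ yz ∈ E, q yz ≤ (E.card : ℝ) * (2:ℝ) ^ (-((t:ℝ) + k')) := by rw [← h2]; exact h1
      _ = mixRho t l S * (2:ℝ) ^ ((l : ℝ) - k') := by
          rw [hEcard, h3, h4, mixRho]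
          field_simp
  -- closeness
  have hqsum : ∑ yz, q yz = 1 := hqd.2
  have hclose : ∑ yz ∈ E, D yz ≤ ∑ yz ∈ E, q yz + ε := by
    have key : ∑ yz ∈ E, (D yz - q yz) ≤ sdist D q := by
      calc ∑ yz ∈ E, (D yz - q yz)
          ≤ ∑ yz ∈ E, (|D yz - q yz| + (D yz - q yz))/2 :=
            Finset.sum_le_sum (fun yz _ => by
              have := le_abs_self (D yz - q yz); linarith)
        _ ≤ ∑ yz, (|D yz - q yz| + (D yz - q yz))/2 := by
            refine Finset.sum_le_sum_of_subset_of_nonneg (by rw [hE]; exact Finset.filter_subset _ _)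
              (fun yz _ _ => ?_)
            have := neg_abs_le (D yz - q yz); linarith
        _ = ((∑ yz, |D yz - q yz|) + ((∑ yz, D yz) - ∑ yz, q yz))/2 := by
            rw [← Finset.sum_div, Finset.sum_add_distrib, Finset.sum_sub_distrib]
        _ = sdist D q := by rw [hDsum, hqsum, sdist]; norm_num
    have hsd' : sdist D q ≤ ε := hsd
    have h5 : ∑ yz ∈ E, (D yz - q yz) = (∑ yz ∈ E, D yz) - ∑ yz ∈ E, q yz :=
      Finset.sum_sub_distrib _ _
    linarith
  have : α < α := by
    calc α < ∑ yz ∈ E, D yz := hAD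
      _ ≤ ∑ yz ∈ E, q yz + ε := hclose
      _ ≤ mixRho t l S * (2:ℝ) ^ ((l : ℝ) - k') + ε := by linarith
      _ = α := hα.symm
  exact lt_irrefl _ this
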